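/- For every integer k ≥ 5, with f_4(k) = -32k^4 + 32k^3 - 32k^2 + 12k + 7, the inequality 1/(f_4(k)+1) - 1/(f_4(k+1)+1) < -1/(2k)^4 + 1/(2k+1)^4 < 1/f_4(k) - 1/f_4(k+1) holds. -/

import Mathlib

theorem stmt_6 (k : ℕ) (hk : 5 ≤ k)
    (f : ℚ → ℚ) (hf : ∀ x, f x = -32 * x^4 + 32 * x^3 - 32 * x^2 + 12 * x + 7) :
    1 / (f k + 1) - 1 / (f (k + 1) + 1) < -1 / (2 * k)^4 + 1 / (2 * k + 1)^4 ∧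
    -1 / ((2 : ℚ) * k)^4 + 1 / (2 * k + 1)^4 < 1 / f k - 1 / f (k + 1) := by
  have hx : (5:ℚ) ≤ (k:ℚ) := by exact_mod_cast hk
  set x : ℚ := (k:ℚ) with hxdef
  have hy : (0:ℚ) ≤ x - 5 := by linarith
  set F : ℚ := f x with hF
  set G : ℚ := f (x + 1) with hG
  have hFv : F = -32 * x^4 + 32 * x^3 - 32 * x^2 + 12 * x + 7 := hf x
  have hGv : G = -32 * (x+1)^4 + 32 * (x+1)^3 - 32 * (x+1)^2 + 12 * (x+1) + 7 := hf (x+1)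
  have hFneg : F + 1 < 0 := by rw [hFv]; nlinarith [sq_nonneg x, sq_nonneg (x-1), hy, sq_nonneg (x*x)]
  have hGneg : G + 1 < 0 := by rw [hGv]; nlinarith [sq_nonneg (x+1), hy, sq_nonneg ((x+1)*(x+1))]
  have hFneg' : F < 0 := by linarith
  have hGneg' : G < 0 := by linarith
  have hxpos : (0:ℚ) < x := by linarith
  have ha : (0:ℚ) < (2*x)^4 := by positivity
  have hb : (0:ℚ) < (2*x+1)^4 := by positivity
  have hab : (0:ℚ) < (2*x)^4 * ((2*x+1)^4) := by positivity
  have hFG1 : (0:ℚ) < (F+1) * (G+1) := mul_pos_of_neg_of_neg hFneg hGneg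
  have hFG : (0:ℚ) < F * G := mul_pos_of_neg_of_neg hFneg' hGneg'
  have hF1 : F + 1 ≠ 0 := ne_of_lt hFneg
  have hG1 : G + 1 ≠ 0 := ne_of_lt hGneg
  have hF0 : F ≠ 0 := ne_of_lt hFneg'
  have hG0 : G ≠ 0 := ne_of_lt hGneg'
  have e1 : 1/(F+1) - 1/(G+1) = (G - F)/((F+1)*(G+1)) := by field_simp; ring
  have e2 : -1/(2*x)^4 + 1/(2*x+1)^4 = ((2*x)^4 - (2*x+1)^4)/((2*x)^4 * ((2*x+1)^4)) := by
    field_simp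
    ring
  have e3 : 1/F - 1/G = (G - F)/(F*G) := by field_simp
  constructor
  · rw [e1, e2, div_lt_div_iff₀ hFG1 hab]
    rw [hFv, hGv]
    nlinarith [hy, pow_nonneg hy 2, pow_nonneg hy 3, pow_nonneg hy 4, pow_nonneg hy 5,
      pow_nonneg hy 6, pow_nonneg hy 7]
  · rw [e3, e2, div_lt_div_iff₀ hab hFG]
    rw [hFv, hGv]
    nlinarith [hy, pow_nonneg hy 2, pow_nonneg hy 3, pow_nonneg hy 4, pow_nonneg hy 5,
      pow_nonneg hy 6, pow_nonneg hy 7]
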